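/- (Yamamoto) Let q be a prime power, l ≥ 2, and χ a non-principal character of 𝔽_{q^l}^*/𝔽_q^*, viewed as a multiplicative character of 𝔽_{q^l}^* trivial on 𝔽_q^*. Then χ(S_{q^l/q}) = −G(χ)/q, where S_{q^l/q} is the Singer difference set (image of {x : tr_{q^l/q}(x)=1} in 𝔽_{q^l}^*/𝔽_q^*) and G(χ) = ∑_{x∈𝔽_{q^l}^*} χ(x) ξ_p^{tr_{q^l/p}(x)} is the Gauss sum of χ over 𝔽_{q^l} (ξ_p a primitive p-th root of unity, p = char 𝔽_q). -/

import Mathlib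

open Finset
open scoped Classical

/-- The relative trace `x ↦ ∑_{i<l} x^{q^i}`. -/
def relTrace {F : Type*} [CommRing F] (q l : ℕ) (x : F) : F :=
  ∑ i ∈ Finset.range l, x ^ q ^ i

lemma sum_pow_char_pow' {F : Type*} [Field F] {p : ℕ} [Fact p.Prime] [CharP F p] (m : ℕ)
    {ι : Type*} (s : Finset ι) (f : ι → F) :
    (∑ i ∈ s, f i) ^ p ^ m = ∑ i ∈ s, f i ^ p ^ m := by
  classical
  induction s using Finset.cons_induction with
  | empty =>
      simp [zero_pow (pow_ne_zero m (Fact.out : p.Prime).ne_zero)]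
  | cons a s ha ih =>
      rw [Finset.sum_cons, Finset.sum_cons, add_pow_char_pow, ih]

lemma exists_algebraMap_eq {K F : Type*} [Field K] [Field F] [Fintype K] [Fintype F]
    [Algebra K F] {q : ℕ} (hq : Fintype.card K = q) {y : F} (hy : y ^ q = y) :
    ∃ c : K, algebraMap K F c = y := by
  classical
  subst hq
  set e := algebraMap K F with he'
  have he : Function.Injective e := e.injective
  have hq2 : 2 ≤ Fintype.card K := Fintype.one_lt_card
  set P : Polynomial F := Polynomial.X ^ Fintype.card K - Polynomial.X with hP
  have hdeg : P.natDegree = Fintype.card K := by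
    have hlt : (Polynomial.X : Polynomial F).natDegree <
        (Polynomial.X ^ Fintype.card K : Polynomial F).natDegree := by
      simp only [Polynomial.natDegree_X_pow, Polynomial.natDegree_X]; omega
    rw [hP, Polynomial.natDegree_sub_eq_left_of_natDegree_lt hlt, Polynomial.natDegree_X_pow]
  have hP0 : P ≠ 0 := by
    intro h
    rw [h, Polynomial.natDegree_zero] at hdeg
    omega
  set S : Finset F := univ.filter (fun z : F => z ^ Fintype.card K = z) with hS
  have hroots : S ⊆ P.roots.toFinset := by
    intro z hz
    rw [hS, mem_filter] at hz
    rw [Multiset.mem_toFinset, Polynomial.mem_roots hP0]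
    simp [Polynomial.IsRoot, hP, sub_eq_zero, hz.2]
  have hScard : S.card ≤ Fintype.card K :=
    le_trans (Finset.card_le_card hroots)
      (le_trans (Multiset.toFinset_card_le _) (le_trans (Polynomial.card_roots' P) hdeg.le))
  have himg_card : ((univ : Finset K).image e).card = Fintype.card K := by
    rw [Finset.card_image_of_injective _ he, card_univ]
  have hsub : (univ : Finset K).image e ⊆ S := by
    intro z hz
    obtain ⟨c, _, rfl⟩ := Finset.mem_image.mp hz
    rw [hS, mem_filter]
    exact ⟨mem_univ _, by rw [← map_pow, FiniteField.pow_card]⟩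
  have heq : (univ : Finset K).image e = S :=
    Finset.eq_of_subset_of_card_le hsub (by rw [himg_card]; exact hScard)
  have hyS : y ∈ S := by rw [hS, mem_filter]; exact ⟨mem_univ _, hy⟩
  rw [← heq] at hyS
  obtain ⟨c, _, hc⟩ := Finset.mem_image.mp hyS
  exact ⟨c, hc⟩

lemma algebraMap_trace_zmod {F : Type*} [Field F] [Fintype F] (p n : ℕ) [Fact p.Prime]
    [CharP F p] [Algebra (ZMod p) F] (h : Fintype.card F = p ^ n) (x : F) :
    algebraMap (ZMod p) F (Algebra.trace (ZMod p) F x) = relTrace p n x := by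
  classical
  have hp : (1:ℕ) < p := (Fact.out : p.Prime).one_lt
  let σh : F →ₐ[ZMod p] F :=
    { toRingHom := frobenius F p
      commutes' := fun r => by
        show frobenius F p (algebraMap (ZMod p) F r) = algebraMap (ZMod p) F r
        rw [frobenius_def, ← map_pow, ZMod.pow_card] }
  have hσh : ∀ y : F, σh y = y ^ p := fun y => rfl
  let σ : F ≃ₐ[ZMod p] F := AlgEquiv.ofBijective σh
    (Finite.injective_iff_bijective.mp (fun a b hab => (frobenius F p).injective hab))
  have hσ : ∀ y : F, σ y = y ^ p := fun y => rfl
  have hσpow : ∀ (i : ℕ) (y : F), (σ ^ i) y = y ^ p ^ i := by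
    intro i
    induction i with
    | zero => intro y; simp
    | succ i ih =>
        intro y
        rw [pow_succ, AlgEquiv.mul_apply, ih (σ y), hσ, ← pow_mul, ← pow_succ']
  have hn : Module.finrank (ZMod p) F = n := by
    have hc := Module.card_eq_pow_finrank (K := ZMod p) (V := F)
    rw [ZMod.card, h] at hc
    exact (Nat.pow_right_injective hp hc.symm)
  have hcard : Fintype.card (F ≃ₐ[ZMod p] F) = n := by
    rw [Fintype.card_eq_nat_card, IsGalois.card_aut_eq_finrank, hn]
  have key : ∀ d, 0 < d → d < n → σ ^ d ≠ 1 := by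
    intro d hd hdn hone
    have hall : ∀ y : F, y ^ p ^ d = y := by
      intro y
      have := congrArg (fun τ : F ≃ₐ[ZMod p] F => τ y) hone
      simpa [hσpow d y] using this
    set P : Polynomial F := Polynomial.X ^ p ^ d - Polynomial.X with hP
    have hP0 : P ≠ 0 := FiniteField.X_pow_card_pow_sub_X_ne_zero F hd.ne' hp
    have hdeg : P.natDegree = p ^ d := FiniteField.X_pow_card_pow_sub_X_natDegree_eq F hd.ne' hp
    have hsub : (univ : Finset F) ⊆ P.roots.toFinset := by
      intro y _
      rw [Multiset.mem_toFinset, Polynomial.mem_roots hP0]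
      simp [Polynomial.IsRoot, hP, sub_eq_zero, hall y]
    have hle : Fintype.card F ≤ p ^ d :=
      le_trans (by rw [← card_univ]; exact Finset.card_le_card hsub)
        (le_trans (Multiset.toFinset_card_le _) (le_trans (Polynomial.card_roots' P) hdeg.le))
    rw [h] at hle
    exact absurd hle (not_le.mpr (Nat.pow_lt_pow_right hp hdn))
  have hinj : Set.InjOn (fun i => σ ^ i) (Finset.range n) := by
    have haux : ∀ i j, i < j → j < n → (σ : F ≃ₐ[ZMod p] F) ^ i ≠ σ ^ j := by
      intro i j hij hjn hEq
      have h1 : σ ^ i * σ ^ (j - i) = σ ^ i * 1 := by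
        rw [mul_one, ← pow_add, Nat.add_sub_cancel' hij.le, hEq]
      exact key (j - i) (by omega) (by omega) (mul_left_cancel h1)
    intro i hi j hj hEq
    simp only [Finset.coe_range, Set.mem_Iio] at hi hj
    rcases lt_trichotomy i j with hlt | hEq' | hlt
    · exact absurd hEq (haux i j hlt hj)
    · exact hEq'
    · exact absurd hEq.symm (haux j i hlt hi)
  have himg : (Finset.range n).image (fun i => σ ^ i) = (univ : Finset (F ≃ₐ[ZMod p] F)) := by
    apply Finset.eq_univ_of_card
    rw [Finset.card_image_of_injOn hinj, Finset.card_range, hcard]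
  calc algebraMap (ZMod p) F (Algebra.trace (ZMod p) F x)
      = ∑ τ : F ≃ₐ[ZMod p] F, τ x := trace_eq_sum_automorphisms x
    _ = ∑ i ∈ Finset.range n, (σ ^ i) x := by
        rw [← himg, Finset.sum_image (fun a ha b hb hEq => hinj (by simpa using ha) (by simpa using hb) hEq)]
    _ = relTrace p n x := Finset.sum_congr rfl fun i _ => hσpow i x

lemma relTrace_mul_eq {F : Type*} [Field F] (p k l q : ℕ) [Fact p.Prime] [CharP F p]
    (hq : q = p ^ k) (hk : 0 < k) (x : F) :
    relTrace p (k * l) x = relTrace p k (relTrace q l x) := by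
  have hR : relTrace p k (relTrace q l x) = ∑ j ∈ range k, ∑ i ∈ range l, x ^ p ^ (k * i + j) := by
    unfold relTrace
    refine sum_congr rfl fun j _ => ?_
    rw [sum_pow_char_pow']
    refine sum_congr rfl fun i _ => ?_
    rw [← pow_mul]
    congr 1
    rw [hq, ← pow_mul, ← pow_add]
  have hL : relTrace p (k * l) x = ∑ j ∈ range k, ∑ i ∈ range l, x ^ p ^ (k * i + j) := by
    unfold relTrace
    rw [← Finset.sum_product']
    refine Finset.sum_nbij' (i := fun m => ((m % k, m / k) : ℕ × ℕ))
      (j := fun pr => k * pr.2 + pr.1) ?_ ?_ ?_ ?_ ?_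
    · intro m hm
      rw [Finset.mem_range] at hm
      rw [Finset.mem_product, Finset.mem_range, Finset.mem_range]
      exact ⟨Nat.mod_lt _ hk, Nat.div_lt_of_lt_mul hm⟩
    · intro pr hpr
      rw [Finset.mem_product, Finset.mem_range, Finset.mem_range] at hpr
      rw [Finset.mem_range]
      calc k * pr.2 + pr.1 < k * pr.2 + k := by omega
        _ = k * (pr.2 + 1) := by ring
        _ ≤ k * l := Nat.mul_le_mul_left k (by omega)
    · intro m hm
      simp [Nat.div_add_mod]
    · intro pr hpr
      rw [Finset.mem_product, Finset.mem_range, Finset.mem_range] at hpr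
      have h1 := hpr.1
      ext
      · simp [Nat.mul_add_mod, Nat.mod_eq_of_lt h1]
      · simp [Nat.mul_add_div hk, Nat.div_eq_of_lt h1]
    · intro m hm
      simp only []
      rw [Nat.div_add_mod]
  rw [hL, hR]

/-- Yamamoto: for a non-principal character `χ` of
`𝔽_{q^l}^*/𝔽_q^*` (i.e. a character of `𝔽_{q^l}^*` trivial on `𝔽_q^*`),
`χ(S_{q^l/q}) = -G(χ)/q`, where `S_{q^l/q}` is the Singer difference set
(so `χ(S_{q^l/q}) = ∑_{tr(x)=1} χ(x)`) and
`G(χ) = ∑_{x ∈ 𝔽_{q^l}^*} χ(x) ξ_p^{tr_{q^l/p}(x)}` is the Gauss sum. -/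
theorem stmt16 {K F : Type*} [Field K] [Field F] [Fintype K] [Fintype F]
    [Algebra K F] (p q l : ℕ) [Fact p.Prime] [CharP F p] [Algebra (ZMod p) F]
    (hq : Fintype.card K = q) (hF : Fintype.card F = q ^ l) (hl : 2 ≤ l)
    (ξ : ℂ) (hξ : IsPrimitiveRoot ξ p)
    (χ : Fˣ →* ℂ) (hχ : χ ≠ 1)
    (hχK : ∀ y : Kˣ, χ (Units.map (algebraMap K F : K →+* F).toMonoidHom y) = 1) :
    ∑ x ∈ (univ : Finset Fˣ).filter (fun x : Fˣ => relTrace q l (x : F) = 1), χ x =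
      -(∑ x : Fˣ, χ x * ξ ^ (Algebra.trace (ZMod p) F (x : F)).val) / (q : ℂ) := by
  classical
  have he : Function.Injective (algebraMap K F) := (algebraMap K F).injective
  haveI : CharP K p := (algebraMap K F).charP he p
  obtain ⟨k, hpp, hk⟩ := FiniteField.card K p
  have hqpk : q = p ^ (k : ℕ) := by rw [← hq, hk]
  have hk0 : 0 < (k : ℕ) := k.pos
  have hFcard : Fintype.card F = p ^ ((k : ℕ) * l) := by
    rw [hF, hqpk, ← pow_mul]
  letI : Algebra (ZMod p) K := ZMod.algebra K p
  have hcomp : (algebraMap K F).comp (algebraMap (ZMod p) K) = algebraMap (ZMod p) F :=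
    RingHom.ext_zmod _ _
  have hq2 : 2 ≤ q := hq ▸ Fintype.one_lt_card
  -- relTrace lands in the image of K
  have hrel_pow : ∀ x : F, relTrace q l x ^ q = relTrace q l x := by
    intro x
    have hxl : x ^ q ^ l = x := by rw [← hF]; exact FiniteField.pow_card x
    unfold relTrace
    have hmain : (∑ i ∈ range l, x ^ q ^ i) ^ q = ∑ i ∈ range l, x ^ q ^ (i + 1) := by
      rw [hqpk, sum_pow_char_pow']
      refine sum_congr rfl fun i _ => ?_
      rw [← pow_mul, ← hqpk, ← pow_succ]
    rw [hmain]
    have h1 := Finset.sum_range_succ' (fun i => x ^ q ^ i) l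
    have h2 := Finset.sum_range_succ (fun i => x ^ q ^ i) l
    simp only [pow_zero, pow_one] at h1
    rw [hxl] at h2
    exact add_right_cancel (h1.symm.trans h2)
  have hτ' : ∀ x : F, ∃ c : K, algebraMap K F c = relTrace q l x := fun x =>
    exists_algebraMap_eq hq (hrel_pow x)
  choose τ hτe using hτ'
  -- the trace to ZMod p factors through τ
  have htrace : ∀ x : F, Algebra.trace (ZMod p) F x = Algebra.trace (ZMod p) K (τ x) := by
    intro x
    apply (algebraMap (ZMod p) F).injective
    rw [algebraMap_trace_zmod p ((k : ℕ) * l) hFcard x, ← hcomp, RingHom.comp_apply,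
      algebraMap_trace_zmod p (k : ℕ) hk (τ x),
      relTrace_mul_eq p (k : ℕ) l q hqpk hk0 x, ← hτe x]
    unfold relTrace
    rw [map_sum]
    exact sum_congr rfl fun j _ => (map_pow _ _ _).symm
  -- the additive character on K
  set ψ : K → ℂ := fun c => ξ ^ (Algebra.trace (ZMod p) K c).val with hψdef
  have hxi : ∀ m : ℕ, ξ ^ (m % p) = ξ ^ m := by
    intro m
    conv_rhs => rw [← Nat.mod_add_div m p]
    rw [pow_add, pow_mul, hξ.pow_eq_one, one_pow, mul_one]
  have hψadd : ∀ a b : K, ψ (a + b) = ψ a * ψ b := by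
    intro a b
    simp only [hψdef, map_add]
    rw [ZMod.val_add, hxi, pow_add]
  have hψ0 : ψ 0 = 1 := by simp [hψdef]
  have hψne : ∃ b : K, ψ b ≠ 1 := by
    have h1 : ∃ b : K, Algebra.trace (ZMod p) K b ≠ 0 := by
      by_contra hcon
      push_neg at hcon
      have hnd := traceForm_nondegenerate (ZMod p) K
      have := hnd.1 1 (fun y => by simp [Algebra.traceForm_apply, hcon])
      exact one_ne_zero this
    obtain ⟨b, hb⟩ := h1
    refine ⟨b, ?_⟩
    have hval : 0 < (Algebra.trace (ZMod p) K b).val :=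
      Nat.pos_of_ne_zero (fun h0 => hb (by rwa [← ZMod.val_eq_zero]))
    exact hξ.pow_ne_one_of_pos_of_lt hval.ne' (ZMod.val_lt _)
  have hψsum : ∑ c : K, ψ c = 0 := by
    obtain ⟨b, hb⟩ := hψne
    have hre : ψ b * ∑ c : K, ψ c = ∑ c : K, ψ c := by
      rw [Finset.mul_sum]
      refine Fintype.sum_equiv (Equiv.addLeft b) _ _ fun c => ?_
      rw [Equiv.coe_addLeft, hψadd]
    have hfac : (ψ b - 1) * ∑ c : K, ψ c = 0 := by
      rw [sub_mul, one_mul, hre, sub_self]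
    rcases mul_eq_zero.mp hfac with h | h
    · exact absurd (sub_eq_zero.mp h) hb
    · exact h
  -- the multiplicative character sums to zero
  have hχsum : ∑ x : Fˣ, χ x = 0 := by
    have hgne : ∃ g : Fˣ, χ g ≠ 1 := by
      by_contra hcon
      push_neg at hcon
      exact hχ (MonoidHom.ext fun g => (hcon g).trans rfl)
    obtain ⟨g, hg⟩ := hgne
    have hre : χ g * ∑ x : Fˣ, χ x = ∑ x : Fˣ, χ x := by
      rw [Finset.mul_sum]
      refine Fintype.sum_equiv (Equiv.mulLeft g) _ _ fun x => ?_
      rw [Equiv.coe_mulLeft, map_mul]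
    have hfac : (χ g - 1) * ∑ x : Fˣ, χ x = 0 := by
      rw [sub_mul, one_mul, hre, sub_self]
    rcases mul_eq_zero.mp hfac with h | h
    · exact absurd (sub_eq_zero.mp h) hg
    · exact h
  -- fiber sums
  set S : K → ℂ := fun c => ∑ x ∈ univ.filter (fun x : Fˣ => τ (x : F) = c), χ x with hSdef
  have hG : ∑ x : Fˣ, χ x * ξ ^ (Algebra.trace (ZMod p) F (x : F)).val
      = ∑ c : K, ψ c * S c := by
    rw [← Finset.sum_fiberwise univ (fun x : Fˣ => τ ((x : F)))
      (fun x : Fˣ => χ x * ξ ^ (Algebra.trace (ZMod p) F (x : F)).val)]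
    refine Finset.sum_congr rfl fun c _ => ?_
    rw [hSdef, Finset.mul_sum]
    refine Finset.sum_congr rfl fun x hx => ?_
    rw [mem_filter] at hx
    rw [htrace (x : F), hx.2]
    ring
  have hS0sum : ∑ c : K, S c = 0 := by
    rw [hSdef, Finset.sum_fiberwise univ (fun x : Fˣ => τ ((x : F))) (fun x : Fˣ => χ x)]
    exact hχsum
  -- fibers over nonzero elements all have the same character sum
  have hSc : ∀ c : K, c ≠ 0 → S c = S 1 := by
    intro c hc
    set u : Fˣ := Units.map (algebraMap K F : K →+* F).toMonoidHom (Units.mk0 c hc) with hu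
    have huval : (u : F) = algebraMap K F c := rfl
    have hχu : χ u = 1 := hχK _
    have hχuinv : χ u⁻¹ = 1 := by
      have h1 : χ u⁻¹ * χ u = 1 := by rw [← map_mul, inv_mul_cancel, map_one]
      rwa [hχu, mul_one] at h1
    have hpowc : ∀ (i : ℕ) (d : K), d ^ q ^ i = d := by
      intro i d
      rw [← hq]
      exact FiniteField.pow_card_pow i d
    have hmul : ∀ y : F, relTrace q l ((u : F) * y) = (u : F) * relTrace q l y := by
      intro y
      unfold relTrace
      rw [Finset.mul_sum]
      refine sum_congr rfl fun i _ => ?_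
      rw [mul_pow, huval, ← map_pow, hpowc]
    have hτmul : ∀ y : F, τ ((u : F) * y) = c * τ y := by
      intro y
      apply he
      rw [hτe, hmul y, ← hτe y, huval, map_mul]
    refine Finset.sum_nbij' (i := fun x => u⁻¹ * x) (j := fun y => u * y) ?_ ?_ ?_ ?_ ?_
    · intro a ha
      rw [mem_filter] at ha ⊢
      refine ⟨mem_univ _, ?_⟩
      have h1 : τ ((u : F) * ((u⁻¹ * a : Fˣ) : F)) = c * τ ((u⁻¹ * a : Fˣ) : F) := by
        exact hτmul _
      have h2 : (u : F) * ((u⁻¹ * a : Fˣ) : F) = (a : F) := by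
        push_cast
        rw [mul_inv_cancel_left₀ (Units.ne_zero u)]
      rw [h2, ha.2] at h1
      exact mul_left_cancel₀ hc (h1.symm.trans (mul_one c).symm)
    · intro a ha
      rw [mem_filter] at ha ⊢
      refine ⟨mem_univ _, ?_⟩
      have h1 : τ ((u : F) * (a : F)) = c * τ (a : F) := hτmul _
      rw [ha.2, mul_one] at h1
      push_cast
      exact h1
    · intro a _
      exact mul_inv_cancel_left u a
    · intro a _
      exact inv_mul_cancel_left u a
    · intro a _
      rw [map_mul, hχuinv, one_mul]
  -- the left-hand side is S 1
  have hLHS : ((univ : Finset Fˣ).filter (fun x : Fˣ => relTrace q l (x : F) = 1))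
      = (univ : Finset Fˣ).filter (fun x : Fˣ => τ ((x : F)) = 1) := by
    refine Finset.filter_congr fun x _ => ?_
    constructor
    · intro h
      apply he
      rw [hτe, map_one, h]
    · intro h
      rw [← hτe, h, map_one]
  -- assemble
  have hcardK1 : ((univ : Finset K).erase 0).card = q - 1 := by
    rw [Finset.card_erase_of_mem (mem_univ _), card_univ, hq]
  have hGval : ∑ x : Fˣ, χ x * ξ ^ (Algebra.trace (ZMod p) F (x : F)).val = -(q : ℂ) * S 1 := by
    rw [hG]
    have hsplit : ∑ c : K, ψ c * S c = ψ 0 * S 0 + ∑ c ∈ (univ : Finset K).erase 0, ψ c * S c := by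
      rw [← Finset.add_sum_erase _ _ (mem_univ (0 : K))]
    have herase : ∑ c ∈ (univ : Finset K).erase 0, ψ c * S c
        = (∑ c ∈ (univ : Finset K).erase 0, ψ c) * S 1 := by
      rw [Finset.sum_mul]
      refine Finset.sum_congr rfl fun c hc => ?_
      rw [hSc c (Finset.ne_of_mem_erase hc)]
    have hψerase : ∑ c ∈ (univ : Finset K).erase 0, ψ c = -1 := by
      have := Finset.add_sum_erase (univ : Finset K) ψ (mem_univ (0 : K))
      rw [hψsum] at this
      rw [hψ0] at this
      linear_combination this
    have hSerase : ∑ c ∈ (univ : Finset K).erase 0, S c = ((q : ℂ) - 1) * S 1 := by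
      have h1 : ∑ c ∈ (univ : Finset K).erase 0, S c
          = ∑ c ∈ (univ : Finset K).erase 0, S 1 := by
        refine Finset.sum_congr rfl fun c hc => hSc c (Finset.ne_of_mem_erase hc)
      rw [h1, Finset.sum_const, hcardK1, nsmul_eq_mul]
      push_cast [Nat.cast_sub (by omega : 1 ≤ q)]
      ring
    have hS0 : S 0 = -((q : ℂ) - 1) * S 1 := by
      have := Finset.add_sum_erase (univ : Finset K) S (mem_univ (0 : K))
      rw [hS0sum] at this
      rw [hSerase] at this
      linear_combination this
    rw [hsplit, herase, hψerase, hψ0, hS0]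
    ring
  rw [hLHS]
  show S 1 = _
  rw [hGval]
  have hqne : (q : ℂ) ≠ 0 := by
    exact_mod_cast (by omega : q ≠ 0)
  field_simp
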